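/- arXiv:1904.04255 — 2 statements merged into one kernel-verified Lean document; each statement's English description precedes it below -/
import Mathlib

section
/- Let (E,C) be any finitely separated graph, let F be the free commutative monoid on E⁰, and let → be the rewriting relation on F defined below (extended by 0 → 0). If α, β ∈ F∖{0} satisfy α = α₁ + α₂ and α → β, then β can be written as β = β₁ + β₂ with α₁ → β₁ and α₂ → β₂. -/
/-- A (finitely) separated graph `(E,C)`: a directed graph together with,
for each vertex `v`, a partition `C v` of `s⁻¹(v)` into pairwise disjoint
nonempty finite subsets. -/
structure SepGraph where
  V : Type
  Ed : Type
  s : Ed → V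
  r : Ed → V
  C : V → Set (Finset Ed)
  c_src : ∀ v : V, ∀ X ∈ C v, ∀ e ∈ X, s e = v
  c_nonempty : ∀ v : V, ∀ X ∈ C v, X.Nonempty
  c_disjoint : ∀ v : V, ∀ X ∈ C v, ∀ Y ∈ C v, X ≠ Y → Disjoint X Y
  c_cover : ∀ e : Ed, ∃ X ∈ C (s e), e ∈ X

namespace SepGraph

variable (G : SepGraph)

/-- There is an edge from `v` to `w`. -/
def Edge (v w : G.V) : Prop := ∃ e : G.Ed, G.s e = v ∧ G.r e = w

/-- There is a directed path from `v` to `w`. -/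
def Reach : G.V → G.V → Prop := Relation.ReflTransGen G.Edge

/-- Mutual reachability: `v` and `w` lie in the same component, i.e. `[v] = [w]`. -/
def VEquiv (v w : G.V) : Prop := G.Reach v w ∧ G.Reach w v

/-- `[v] ≤ [w]` in the antisymmetrization poset `I` of `E⁰`. -/
def VLe (v w : G.V) : Prop := G.Reach w v

/-- `[v] < [w]` in the antisymmetrization poset `I` of `E⁰`. -/
def VLt (v w : G.V) : Prop := G.Reach w v ∧ ¬ G.Reach v w

/-- The free commutative monoid `F` on the vertex set `E⁰`. -/
abbrev FreeM := G.V →₀ ℕ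

/-- The basis element of `F` corresponding to a vertex. -/
noncomputable def vert (v : G.V) : G.FreeM := Finsupp.single v 1

/-- `r(X) = Σ_{e ∈ X} r(e)` as an element of `F`. -/
noncomputable def rX (X : Finset G.Ed) : G.FreeM := ∑ e ∈ X, Finsupp.single (G.r e) 1

/-- The defining relations of `M(E,C)`: `a_v = Σ_{e ∈ X} a_{r(e)}` for `X ∈ C_v`. -/
def Rel : G.FreeM → G.FreeM → Prop := fun a b =>
  ∃ v : G.V, ∃ X ∈ G.C v, a = G.vert v ∧ b = G.rX X

/-- The congruence on `F` generated by the defining relations. -/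
noncomputable def mCon : AddCon G.FreeM := addConGen G.Rel

/-- The monoid `M(E,C)` of the separated graph `(E,C)`. -/
def M := G.mCon.Quotient

noncomputable instance : AddCommMonoid G.M := inferInstanceAs (AddCommMonoid G.mCon.Quotient)

/-- The generator `a_v` of `M(E,C)`. -/
noncomputable def gen (v : G.V) : G.M := G.mCon.mk' (G.vert v)

end SepGraph

/-- The data witnessing that a separated graph is *adaptable*: the
antisymmetrization `I` of `E⁰` is finite, it is partitioned into free and
regular elements (with free components reduced to a single vertex `v^p`),
and the conditions of Definition 1.6 of the paper hold.  Here, for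
`p ∈ I_reg`, the subgraph `E_p` is the restriction of `E` to the class `p`. -/
structure SepGraph.AdaptableStructure (G : SepGraph) where
  /-- the partition `I = I_free ⊔ I_reg` (a vertex is free if its class is free) -/
  free : G.V → Prop
  /-- `I` is a finite poset -/
  finite_components : Finite (Quot G.VEquiv)
  free_respects : ∀ v w : G.V, G.VEquiv v w → (free v ↔ free w)
  /-- a free component consists of a single vertex `E_p⁰ = {v^p}` -/
  free_singleton : ∀ v : G.V, free v → ∀ w : G.V, G.VEquiv w v → w = v
  /-- for free `p`, `s⁻¹(v^p) = ∅` iff `p` is minimal in `I` -/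
  free_minimal : ∀ v : G.V, free v →
    ((¬ ∃ e : G.Ed, G.s e = v) ↔ ∀ w : G.V, G.Reach v w → G.VEquiv v w)
  /-- for free non-minimal `p`, `C_{v^p} = {X₁,…,X_{k(p)}}` is a finite family -/
  free_C_finite : ∀ v : G.V, free v → (G.C v).Finite
  /-- each `X_i ∈ C_{v^p}` contains exactly one loop `α(p,i)` at `v^p` -/
  free_loop : ∀ v : G.V, free v → ∀ X ∈ G.C v, ∃! e : G.Ed, e ∈ X ∧ G.r e = v
  /-- the remaining edges `β(p,i,t)` of `X_i` end in strictly smaller components -/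
  free_targets : ∀ v : G.V, free v → ∀ X ∈ G.C v, ∀ e ∈ X, G.r e = v ∨ G.VLt (G.r e) v
  /-- `g(p,i) ≥ 1`: there is at least one connector `β(p,i,1)` in each `X_i` -/
  free_beta : ∀ v : G.V, free v → ∀ X ∈ G.C v, ∃ e ∈ X, G.r e ≠ v
  /-- for regular `p` and `w ∈ E_p⁰`, `|C_w| = 1` -/
  reg_unique_C : ∀ w : G.V, ¬ free w → ∃! X : Finset G.Ed, X ∈ G.C w
  /-- for regular `p` and `w ∈ E_p⁰`, `|s_{E_p}⁻¹(w)| ≥ 2` -/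
  reg_two_edges : ∀ w : G.V, ¬ free w → ∃ e₁ e₂ : G.Ed, e₁ ≠ e₂ ∧ G.s e₁ = w ∧ G.s e₂ = w ∧
    G.VEquiv (G.r e₁) w ∧ G.VEquiv (G.r e₂) w
  /-- every edge leaving `w ∈ E_p⁰` stays in `E_p` or goes to some `E_q⁰` with `q < p` -/
  reg_targets : ∀ w : G.V, ¬ free w → ∀ e : G.Ed, G.s e = w →
    G.VEquiv (G.r e) w ∨ G.VLt (G.r e) w

namespace SepGraph

variable (G : SepGraph)

/-- One step `→₁` of the rewriting relation on `F∖{0}`: replace one occurrence of a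
vertex `v` of the support by `r(X)`, for some `X ∈ C_v`. -/
def Step : G.FreeM → G.FreeM → Prop := fun a b =>
  ∃ (v : G.V) (X : Finset G.Ed) (a' : G.FreeM),
    X ∈ G.C v ∧ a = G.vert v + a' ∧ b = a' + G.rX X

/-- The rewriting relation `→`: the reflexive and transitive closure of `→₁`
(in particular `0 → 0`). -/
def Rw : G.FreeM → G.FreeM → Prop := Relation.ReflTransGen G.Step

end SepGraph

private lemma step_split (G : SepGraph) (γ₁ γ₂ β : G.FreeM)
    (h : G.Step (γ₁ + γ₂) β) :
    ∃ β₁ β₂ : G.FreeM, β = β₁ + β₂ ∧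
      ((G.Step γ₁ β₁ ∧ γ₂ = β₂) ∨ (γ₁ = β₁ ∧ G.Step γ₂ β₂)) := by
  obtain ⟨v, X, a', hX, hsum, hb⟩ := h
  have hv : 1 ≤ γ₁ v + γ₂ v := by
    have := congrArg (fun f : G.FreeM => f v) hsum
    simp only [Finsupp.add_apply, SepGraph.vert, Finsupp.single_eq_same] at this
    omega
  by_cases h1 : 1 ≤ γ₁ v
  · have hle : G.vert v ≤ γ₁ := by
      rw [SepGraph.vert, Finsupp.single_le_iff]; exact h1
    have hγ : γ₁ = G.vert v + (γ₁ - G.vert v) := (add_tsub_cancel_of_le hle).symm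
    have ha' : a' = (γ₁ - G.vert v) + γ₂ := by
      apply add_left_cancel (a := G.vert v)
      rw [← hsum, ← add_assoc, ← hγ]
    refine ⟨(γ₁ - G.vert v) + G.rX X, γ₂, ?_, Or.inl ⟨⟨v, X, _, hX, hγ, rfl⟩, rfl⟩⟩
    rw [hb, ha']; exact add_right_comm _ _ _
  · have h2 : 1 ≤ γ₂ v := by omega
    have hle : G.vert v ≤ γ₂ := by
      rw [SepGraph.vert, Finsupp.single_le_iff]; exact h2
    have hγ : γ₂ = G.vert v + (γ₂ - G.vert v) := (add_tsub_cancel_of_le hle).symm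
    have ha' : a' = γ₁ + (γ₂ - G.vert v) := by
      apply add_left_cancel (a := G.vert v)
      rw [← hsum]
      conv_lhs => rw [hγ]
      exact add_left_comm _ _ _
    refine ⟨γ₁, (γ₂ - G.vert v) + G.rX X, ?_, Or.inr ⟨rfl, ⟨v, X, _, hX, hγ, rfl⟩⟩⟩
    rw [hb, ha']; exact add_assoc _ _ _

/-- (cf. Lemma 2.3) Let `(E,C)` be any finitely separated graph.  If
`α = α₁ + α₂` with `α, β ∈ F∖{0}` and `α → β`, then `β = β₁ + β₂` where `α₁ → β₁` and
`α₂ → β₂`. -/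
theorem stmt3 (G : SepGraph) (α α₁ α₂ β : G.FreeM) (hα : α ≠ 0) (hβ : β ≠ 0)
    (hsum : α = α₁ + α₂) (h : G.Rw α β) :
    ∃ β₁ β₂ : G.FreeM, β = β₁ + β₂ ∧ G.Rw α₁ β₁ ∧ G.Rw α₂ β₂ := by
  subst hsum
  clear hα hβ
  induction h with
  | refl => exact ⟨α₁, α₂, rfl, .refl, .refl⟩
  | tail hab hstep ih =>
    obtain ⟨γ₁, γ₂, rfl, h1, h2⟩ := ih
    obtain ⟨β₁, β₂, rfl, hcase⟩ := step_split G γ₁ γ₂ _ hstep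
    rcases hcase with ⟨hs, rfl⟩ | ⟨rfl, hs⟩
    · exact ⟨_, _, rfl, h1.tail hs, h2⟩
    · exact ⟨_, _, rfl, h1, h2.tail hs⟩
end

section
/- Let (E,C) be an adaptable separated graph, let F be the free commutative monoid on E⁰, let → be the rewriting relation on F∖{0} and ∼ the congruence on F generated by →₁. Then for nonzero α, β ∈ F, one has α ∼ β if and only if there exists γ ∈ F such that α → γ and β → γ. -/
namespace SepGraph

variable (G : SepGraph)

/-- Cancellation in `G.FreeM`. -/
lemma freeM_cancel {c a b : G.FreeM} (h : c + a = c + b) : a = b := by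
  ext x
  have := congrArg (fun f => f x) h
  simp only [Finsupp.add_apply] at this
  omega

/-- Splitting lemma for `vert v + a = vert w + b`. -/
lemma vert_add_eq {v w : G.V} {a b : G.FreeM} (h : G.vert v + a = G.vert w + b) :
    (v = w ∧ a = b) ∨ ∃ c, a = G.vert w + c ∧ b = G.vert v + c := by
  by_cases hvw : v = w
  · subst hvw
    exact Or.inl ⟨rfl, G.freeM_cancel h⟩
  · right
    have hw : a w = 1 + b w := by
      have := congrArg (fun f => f w) h
      simp only [SepGraph.vert, Finsupp.add_apply, Finsupp.single_eq_same,
        Finsupp.single_eq_of_ne' hvw] at this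
      omega
    refine ⟨a - G.vert w, ?_, ?_⟩
    · ext x
      by_cases hx : x = w
      · subst hx
        simp [SepGraph.vert, Finsupp.tsub_apply, Finsupp.single_apply, hw]
      · simp [SepGraph.vert, Finsupp.tsub_apply, Finsupp.single_apply, Ne.symm hx, hx]
    · set c := a - G.vert w with hc
      have ha : a = G.vert w + c := by
        ext x
        by_cases hx : x = w
        · subst hx
          simp [hc, SepGraph.vert, Finsupp.tsub_apply, Finsupp.single_apply, hw]
        · simp [hc, SepGraph.vert, Finsupp.tsub_apply, Finsupp.single_apply, Ne.symm hx, hx]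
      apply G.freeM_cancel (c := G.vert w)
      conv_lhs => rw [← h, ha]
      abel

lemma step_add {a b : G.FreeM} (c : G.FreeM) (h : G.Step a b) :
    G.Step (a + c) (b + c) := by
  obtain ⟨v, X, a', hX, rfl, rfl⟩ := h
  exact ⟨v, X, a' + c, hX, by abel, by abel⟩

lemma rw_add {a b : G.FreeM} (c : G.FreeM) (h : G.Rw a b) : G.Rw (a + c) (b + c) := by
  induction h with
  | refl => exact Relation.ReflTransGen.refl
  | tail _ h2 ih => exact ih.tail (G.step_add c h2)

/-- For a free vertex `v` and `X ∈ C v`, `r(X) = v + B` for some `B`. -/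
lemma rX_free (A : G.AdaptableStructure) {v : G.V} (hv : A.free v) {X : Finset G.Ed}
    (hX : X ∈ G.C v) : ∃ B : G.FreeM, G.rX X = G.vert v + B := by
  classical
  obtain ⟨e₀, ⟨he₀X, he₀r⟩, -⟩ := A.free_loop v hv X hX
  refine ⟨∑ e ∈ X.erase e₀, Finsupp.single (G.r e) 1, ?_⟩
  rw [SepGraph.rX, ← Finset.add_sum_erase _ _ he₀X, he₀r]
  rfl

/-- One-step diamond. -/
lemma diamond (A : G.AdaptableStructure) {a b c : G.FreeM} (hab : G.Step a b)
    (hac : G.Step a c) : ∃ d, Relation.ReflGen G.Step b d ∧ Relation.ReflTransGen G.Step c d := by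
  obtain ⟨v, X, a₁, hX, rfl, rfl⟩ := hab
  obtain ⟨w, Y, a₂, hY, heq, rfl⟩ := hac
  rcases G.vert_add_eq heq with ⟨rfl, rfl⟩ | ⟨a₀, rfl, rfl⟩
  · -- same position
    by_cases hv : A.free v
    · obtain ⟨B, hB⟩ := G.rX_free A hv hX
      obtain ⟨B', hB'⟩ := G.rX_free A hv hY
      refine ⟨a₁ + B + G.rX Y, Relation.ReflGen.single ?_, Relation.ReflTransGen.single ?_⟩
      · exact ⟨v, Y, a₁ + B, hY, by rw [hB]; abel, rfl⟩
      · exact ⟨v, X, a₁ + B', hX, by rw [hB']; abel, by rw [hB, hB']; abel⟩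
    · obtain ⟨X₀, hX₀, hu⟩ := A.reg_unique_C v hv
      rw [hu X hX, hu Y hY]
      exact ⟨_, Relation.ReflGen.refl, Relation.ReflTransGen.refl⟩
  · -- disjoint positions
    refine ⟨a₀ + G.rX X + G.rX Y, Relation.ReflGen.single ?_, Relation.ReflTransGen.single ?_⟩
    · exact ⟨w, Y, a₀ + G.rX X, hY, by abel, rfl⟩
    · exact ⟨v, X, a₀ + G.rX Y, hX, by abel, by abel⟩

lemma rw_to_con {a b : G.FreeM} (h : G.Rw a b) : (addConGen G.Step) a b := by
  induction h with
  | refl => exact (addConGen G.Step).refl _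
  | tail _ h2 ih => exact (addConGen G.Step).trans ih (AddConGen.Rel.of _ _ h2)

end SepGraph

/-- (Confluence) Let `(E,C)` be an adaptable separated graph and let
`∼` be the congruence on `F` generated by `→₁`.  For nonzero `α, β ∈ F`, `α ∼ β` iff
there is `γ ∈ F` with `α → γ` and `β → γ`. -/
theorem stmt4 (G : SepGraph) (A : G.AdaptableStructure) (α β : G.FreeM)
    (hα : α ≠ 0) (hβ : β ≠ 0) :
    (addConGen G.Step) α β ↔ ∃ γ : G.FreeM, G.Rw α γ ∧ G.Rw β γ := by
  constructor
  · intro h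
    have hJ : addConGen G.Step ≤
        { r := Relation.Join G.Rw
          iseqv := Relation.equivalence_join_reflTransGen (fun a b c => G.diamond A)
          add' := by
            rintro w x y z ⟨γ, hwγ, hxγ⟩ ⟨δ, hyδ, hzδ⟩
            refine ⟨γ + δ, ?_, ?_⟩
            · exact (G.rw_add y hwγ).trans
                (by rw [add_comm γ y, add_comm γ δ]; exact G.rw_add γ hyδ)
            · exact (G.rw_add z hxγ).trans
                (by rw [add_comm γ z, add_comm γ δ]; exact G.rw_add γ hzδ) } := by
      apply AddCon.addConGen_le.mpr
      intro x y hs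
      exact ⟨y, Relation.ReflTransGen.single hs, Relation.ReflTransGen.refl⟩
    exact hJ h
  · rintro ⟨γ, h1, h2⟩
    exact (G.rw_to_con h1).trans ((G.rw_to_con h2).symm)
end
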